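/- Let N ≥ 1, max(0,(N-2)/(N+2)) < q < N/(N+2), and fix L ≥ 0. Then there exists a unique B > 0 satisfying B = (2 + 4/N)·c·∫_0^∞ r^{N+1} (r^4 + B r^2 + L)^{−1/(1−q)} dr, where c = (q/(1−q))^{1/(1−q)} |S^{N-1}|. -/

import Mathlib

open MeasureTheory Real

/-- Surface measure of the unit sphere `S^{N-1}` in `ℝ^N`, equal to `N` times the
volume of the unit ball. -/
noncomputable def sphereSurface (N : ℕ) : ℝ :=
  N * (volume (Metric.ball (0 : EuclideanSpace ℝ (Fin N)) 1)).toReal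

open Set in
lemma base_pos {L B r : ℝ} (hL : 0 ≤ L) (hB : 0 < B) (hr : 0 < r) :
    0 < r ^ 4 + B * r ^ 2 + L := by positivity

lemma fcont {N : ℕ} {p L B : ℝ} (hL : 0 ≤ L) (hB : 0 < B) :
    ContinuousOn (fun r : ℝ => r ^ ((N : ℝ) + 1) * (r ^ 4 + B * r ^ 2 + L) ^ (-p))
      (Set.Ioi 0) := by
  apply ContinuousOn.mul
  · exact continuousOn_id.rpow_const fun x hx => Or.inl (ne_of_gt hx)
  · refine ContinuousOn.rpow_const ?_ fun x hx => Or.inl (ne_of_gt (base_pos hL hB hx))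
    fun_prop

lemma fintegrable {N : ℕ} {p L B : ℝ} (hL : 0 ≤ L) (hB : 0 < B) (hp : 0 < p)
    (h1 : (-1 : ℝ) < (N : ℝ) + 1 - 2 * p) (h2 : (N : ℝ) + 1 - 4 * p < -1) :
    IntegrableOn (fun r : ℝ => r ^ ((N : ℝ) + 1) * (r ^ 4 + B * r ^ 2 + L) ^ (-p))
      (Set.Ioi 0) := by
  have hmeas : ∀ s ⊆ Set.Ioi (0:ℝ), MeasurableSet s →
      AEStronglyMeasurable (fun r : ℝ => r ^ ((N : ℝ) + 1) * (r ^ 4 + B * r ^ 2 + L) ^ (-p))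
        (volume.restrict s) := fun s hs hsm =>
    ((fcont hL hB).mono hs).aestronglyMeasurable hsm
  have : Set.Ioi (0:ℝ) = Set.Ioc 0 1 ∪ Set.Ioi 1 := by
    rw [Set.Ioc_union_Ioi_eq_Ioi]; norm_num
  rw [this]
  apply IntegrableOn.union
  · -- on Ioc 0 1, dominated by B^(-p) * r^(N+1-2p)
    have hbound : IntegrableOn (fun r : ℝ => B ^ (-p) * r ^ ((N : ℝ) + 1 - 2 * p))
        (Set.Ioc 0 1) := by
      apply Integrable.const_mul
      exact (intervalIntegrable_iff_integrableOn_Ioc_of_le (by norm_num : (0:ℝ) ≤ 1)).mp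
        (intervalIntegral.intervalIntegrable_rpow' h1)
    refine Integrable.mono' hbound (hmeas _ Set.Ioc_subset_Ioi_self measurableSet_Ioc) ?_
    filter_upwards [ae_restrict_mem measurableSet_Ioc] with r hr
    obtain ⟨hr0, hr1⟩ := hr
    have h1' : (r ^ 4 + B * r ^ 2 + L) ^ (-p) ≤ (B * r ^ 2) ^ (-p) := by
      apply rpow_le_rpow_of_nonpos (by positivity) (by nlinarith) (by linarith)
    have hnn : 0 ≤ r ^ ((N : ℝ) + 1) * (r ^ 4 + B * r ^ 2 + L) ^ (-p) := by positivity
    rw [Real.norm_of_nonneg hnn]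
    have : (B * r ^ 2) ^ (-p) = B ^ (-p) * r ^ (-(2*p)) := by
      rw [Real.mul_rpow hB.le (by positivity)]
      congr 1
      rw [← Real.rpow_natCast r 2, ← Real.rpow_mul hr0.le]
      norm_num
    calc r ^ ((N : ℝ) + 1) * (r ^ 4 + B * r ^ 2 + L) ^ (-p)
        ≤ r ^ ((N : ℝ) + 1) * (B ^ (-p) * r ^ (-(2*p))) := by
          rw [this] at h1'
          exact mul_le_mul_of_nonneg_left h1' (by positivity)
      _ = B ^ (-p) * r ^ ((N : ℝ) + 1 - 2 * p) := by
          rw [mul_left_comm, ← Real.rpow_add hr0]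
          congr 1
  · -- on Ioi 1, dominated by r^(N+1-4p)
    have hbound : IntegrableOn (fun r : ℝ => r ^ ((N : ℝ) + 1 - 4 * p)) (Set.Ioi 1) :=
      integrableOn_Ioi_rpow_of_lt h2 one_pos
    refine Integrable.mono' hbound
      (hmeas _ (fun x hx => Set.mem_Ioi.mpr (lt_trans one_pos (Set.mem_Ioi.mp hx))) measurableSet_Ioi) ?_
    filter_upwards [ae_restrict_mem measurableSet_Ioi] with r hr
    have hr0 : (0:ℝ) < r := lt_trans one_pos hr
    have h1' : (r ^ 4 + B * r ^ 2 + L) ^ (-p) ≤ (r ^ 4) ^ (-p) := by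
      apply rpow_le_rpow_of_nonpos (by positivity) (by nlinarith) (by linarith)
    have hnn : 0 ≤ r ^ ((N : ℝ) + 1) * (r ^ 4 + B * r ^ 2 + L) ^ (-p) := by positivity
    rw [Real.norm_of_nonneg hnn]
    have : (r ^ 4 : ℝ) ^ (-p) = r ^ (-(4*p)) := by
      rw [← Real.rpow_natCast r 4, ← Real.rpow_mul hr0.le]
      norm_num
    calc r ^ ((N : ℝ) + 1) * (r ^ 4 + B * r ^ 2 + L) ^ (-p)
        ≤ r ^ ((N : ℝ) + 1) * r ^ (-(4*p)) := by
          rw [this] at h1'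
          exact mul_le_mul_of_nonneg_left h1' (by positivity)
      _ = r ^ ((N : ℝ) + 1 - 4 * p) := by
          rw [← Real.rpow_add hr0]
          congr 1

lemma fmono {N : ℕ} {p L B1 B2 : ℝ} (hL : 0 ≤ L) (hB1 : 0 < B1) (hB12 : B1 ≤ B2)
    (hp : 0 < p) (h1 : (-1 : ℝ) < (N : ℝ) + 1 - 2 * p) (h2 : (N : ℝ) + 1 - 4 * p < -1) :
    (∫ r in Set.Ioi (0:ℝ), r ^ ((N : ℝ) + 1) * (r ^ 4 + B2 * r ^ 2 + L) ^ (-p)) ≤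
      ∫ r in Set.Ioi (0:ℝ), r ^ ((N : ℝ) + 1) * (r ^ 4 + B1 * r ^ 2 + L) ^ (-p) := by
  apply setIntegral_mono_on (fintegrable hL (lt_of_lt_of_le hB1 hB12) hp h1 h2)
    (fintegrable hL hB1 hp h1 h2) measurableSet_Ioi
  intro r hr
  have hr0 : (0:ℝ) < r := hr
  apply mul_le_mul_of_nonneg_left _ (by positivity)
  exact rpow_le_rpow_of_nonpos (base_pos hL hB1 hr0) (by nlinarith) (by linarith)

lemma fpos {N : ℕ} {p L B : ℝ} (hL : 0 ≤ L) (hB : 0 < B) (hp : 0 < p)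
    (h1 : (-1 : ℝ) < (N : ℝ) + 1 - 2 * p) (h2 : (N : ℝ) + 1 - 4 * p < -1) :
    0 < ∫ r in Set.Ioi (0:ℝ), r ^ ((N : ℝ) + 1) * (r ^ 4 + B * r ^ 2 + L) ^ (-p) := by
  rw [setIntegral_pos_iff_support_of_nonneg_ae ?_ (fintegrable hL hB hp h1 h2)]
  · refine lt_of_lt_of_le ?_ (measure_mono (fun x hx => Set.mem_inter ?_ hx))
    · simp [Real.volume_Ioi]
    · have hx0 : (0:ℝ) < x := hx
      have h : 0 < x ^ ((N : ℝ) + 1) * (x ^ 4 + B * x ^ 2 + L) ^ (-p) := by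
        have := base_pos hL hB hx0
        positivity
      exact Function.mem_support.mpr h.ne'
  · filter_upwards [ae_restrict_mem measurableSet_Ioi] with r hr
    have hr0 : (0:ℝ) < r := hr
    positivity

lemma fcontAt {N : ℕ} {p L : ℝ} (hL : 0 ≤ L) (hp : 0 < p)
    (h1 : (-1 : ℝ) < (N : ℝ) + 1 - 2 * p) (h2 : (N : ℝ) + 1 - 4 * p < -1)
    {B0 : ℝ} (hB0 : 0 < B0) :
    ContinuousAt (fun B : ℝ =>
      ∫ r in Set.Ioi (0:ℝ), r ^ ((N : ℝ) + 1) * (r ^ 4 + B * r ^ 2 + L) ^ (-p)) B0 := by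
  apply continuousAt_of_dominated
    (bound := fun r : ℝ => r ^ ((N : ℝ) + 1) * (r ^ 4 + (B0 / 2) * r ^ 2 + L) ^ (-p))
  · filter_upwards [eventually_gt_nhds (half_lt_self hB0)] with B hB
    exact (fcont hL (lt_trans (half_pos hB0) hB)).aestronglyMeasurable measurableSet_Ioi
  · filter_upwards [eventually_gt_nhds (half_lt_self hB0)] with B hB
    filter_upwards [ae_restrict_mem measurableSet_Ioi] with r hr
    have hr0 : (0:ℝ) < r := hr
    have hB' : 0 < B := lt_trans (half_pos hB0) hB
    have hnn : 0 ≤ r ^ ((N : ℝ) + 1) * (r ^ 4 + B * r ^ 2 + L) ^ (-p) := by positivity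
    rw [Real.norm_of_nonneg hnn]
    apply mul_le_mul_of_nonneg_left _ (by positivity)
    exact rpow_le_rpow_of_nonpos (base_pos hL (half_pos hB0) hr0) (by nlinarith) (by linarith)
  · exact fintegrable hL (half_pos hB0) hp h1 h2
  · filter_upwards [ae_restrict_mem measurableSet_Ioi] with r hr
    have hr0 : (0:ℝ) < r := hr
    apply ContinuousAt.mul continuousAt_const
    apply ContinuousAt.rpow_const
    · fun_prop
    · exact Or.inl (ne_of_gt (base_pos hL hB0 hr0))

lemma sphereSurface_pos {N : ℕ} (hN : 1 ≤ N) : 0 < sphereSurface N := by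
  unfold sphereSurface
  apply mul_pos (by exact_mod_cast Nat.pos_of_ne_zero (by omega))
  exact ENNReal.toReal_pos (Metric.measure_ball_pos volume _ one_pos).ne'
    measure_ball_lt_top.ne

theorem stmt_8 (N : ℕ) (hN : 1 ≤ N) (q : ℝ)
    (hq1 : max 0 (((N : ℝ) - 2) / (N + 2)) < q) (hq2 : q < (N : ℝ) / (N + 2))
    (L : ℝ) (hL : 0 ≤ L) :
    ∃! B : ℝ, 0 < B ∧
      B = (2 + 4 / N) * (q / (1 - q)) ^ (1 / (1 - q)) * sphereSurface N *
        ∫ r in Set.Ioi (0 : ℝ),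
          r ^ ((N : ℝ) + 1) * (r ^ 4 + B * r ^ 2 + L) ^ (-(1 / (1 - q))) := by
  have hNr : (0:ℝ) < N := by exact_mod_cast Nat.pos_of_ne_zero (by omega)
  have hN2 : (0:ℝ) < (N:ℝ) + 2 := by linarith
  have hq0 : 0 < q := lt_of_le_of_lt (le_max_left 0 _) hq1
  have hq1' : ((N:ℝ) - 2) / (N + 2) < q := lt_of_le_of_lt (le_max_right 0 _) hq1
  have hql1 : q < 1 := lt_of_lt_of_le hq2 (by rw [div_le_one hN2]; linarith)
  have h1q : 0 < 1 - q := by linarith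
  set p : ℝ := 1 / (1 - q) with hp_def
  have hp0 : 0 < p := by positivity
  have hA : q * ((N:ℝ) + 2) < N := (lt_div_iff₀ hN2).mp hq2
  have hB' : (N:ℝ) - 2 < q * ((N:ℝ) + 2) := (div_lt_iff₀ hN2).mp hq1'
  have hup : p < ((N:ℝ) + 2) / 2 := by
    rw [hp_def, div_lt_div_iff₀ h1q two_pos]
    nlinarith
  have hlo : ((N:ℝ) + 2) / 4 < p := by
    rw [hp_def, div_lt_div_iff₀ (by norm_num : (0:ℝ) < 4) h1q]
    nlinarith
  have h1 : (-1 : ℝ) < (N : ℝ) + 1 - 2 * p := by linarith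
  have h2 : (N : ℝ) + 1 - 4 * p < -1 := by linarith
  set C : ℝ := (2 + 4 / N) * (q / (1 - q)) ^ p * sphereSurface N with hC_def
  have hCpos : 0 < C := by
    apply mul_pos (mul_pos (by positivity) _) (sphereSurface_pos hN)
    exact Real.rpow_pos_of_pos (by positivity) _
  set F : ℝ → ℝ := fun B =>
    ∫ r in Set.Ioi (0:ℝ), r ^ ((N : ℝ) + 1) * (r ^ 4 + B * r ^ 2 + L) ^ (-p) with hF_def
  have key : ∀ B1 B2 : ℝ, 0 < B1 → B1 ≤ B2 → F B2 ≤ F B1 := fun B1 B2 h h' =>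
    fmono hL h h' hp0 h1 h2
  have Fpos : ∀ B : ℝ, 0 < B → 0 < F B := fun B h => fpos hL h hp0 h1 h2
  -- existence via IVT
  set b1 : ℝ := min 1 (C * F 1 / 2) with hb1_def
  have hb1pos : 0 < b1 := lt_min one_pos (by have := Fpos 1 one_pos; positivity)
  have hgb1 : 0 < C * F b1 - b1 := by
    have hF : F 1 ≤ F b1 := key b1 1 hb1pos (min_le_left _ _)
    have h' : C * F 1 ≤ C * F b1 := mul_le_mul_of_nonneg_left hF hCpos.le
    have hb1le : b1 ≤ C * F 1 / 2 := min_le_right _ _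
    have := Fpos 1 one_pos
    nlinarith
  set b2 : ℝ := max b1 (C * F b1 + 1) with hb2_def
  have hb12 : b1 ≤ b2 := le_max_left _ _
  have hgb2 : C * F b2 - b2 < 0 := by
    have hF : F b2 ≤ F b1 := key b1 b2 hb1pos hb12
    have h' : C * F b2 ≤ C * F b1 := mul_le_mul_of_nonneg_left hF hCpos.le
    have : C * F b1 + 1 ≤ b2 := le_max_right _ _
    linarith
  have hgcont : ContinuousOn (fun B => C * F B - B) (Set.Icc b1 b2) := by
    intro x hx
    have hx0 : 0 < x := lt_of_lt_of_le hb1pos hx.1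
    exact ((continuousAt_const.mul (fcontAt hL hp0 h1 h2 hx0)).sub continuousAt_id)
      |>.continuousWithinAt
  obtain ⟨B, hBmem, hBeq⟩ := intermediate_value_Icc' hb12 hgcont
    (Set.mem_Icc.mpr ⟨hgb2.le, hgb1.le⟩)
  have hBpos : 0 < B := lt_of_lt_of_le hb1pos hBmem.1
  have hBeq2 : C * F B - B = 0 := hBeq
  refine ⟨B, ⟨hBpos, show B = C * F B by linarith⟩, ?_⟩
  rintro y ⟨hy0, hyeq'⟩
  have hyeq : y = C * F y := hyeq'
  have hBeq' : B = C * F B := by linarith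
  rcases le_total y B with h | h
  · have : F B ≤ F y := key y B hy0 h
    have : C * F B ≤ C * F y := mul_le_mul_of_nonneg_left this hCpos.le
    linarith
  · have : F y ≤ F B := key B y hBpos h
    have : C * F y ≤ C * F B := mul_le_mul_of_nonneg_left this hCpos.le
    linarith
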